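/- Let φ^0, φ^1, …, φ^N be a sequence in a real inner product space H. Define Θ^{(ν)}_{φ,0} = 0 and Θ^{(ν)}_{φ,n} = (1/2) ∑_{k=1}^{n} b^{(ν)}_{n,k} ‖φ^k‖² for n ≥ 1; set δ^{(ν)}_{n,k} = b^{(ν)}_{n,k+1} − b^{(ν)}_{n−1,k} and (δ^{(ν)}_{n,k})_+ = max{δ^{(ν)}_{n,k}, 0}; define R^{(ν)}_{φ,0} = R^{(ν)}_{φ,1} = 0 and R^{(ν)}_{φ,n} = (1/2) ∑_{j=2}^{n} ∑_{k=1}^{j−1} (δ^{(ν)}_{j,k})_+ ‖φ^k‖² for n ≥ 2; and set E^{(ν)}_{φ,n} = Θ^{(ν)}_{φ,n} − R^{(ν)}_{φ,n}. Then for all 1 ≤ n ≤ N, ⟨Δ_τ^{ν(t_n)} φ^n, φ^n⟩ ≥ (1/τ)(E^{(ν)}_{φ,n} − E^{(ν)}_{φ,n−1}) − (1/(2τ)) b^{(ν)}_{n,1} ‖φ^0‖². -/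

import Mathlib

open Finset
open scoped RealInnerProductSpace

private lemma tel_aux (f : ℕ → ℝ) (m : ℕ) :
    ∑ k ∈ Icc 1 m, (f k - f (k+1)) = f 1 - f (m+1) := by
  induction m with
  | zero => simp
  | succ m ih =>
    rw [Finset.sum_Icc_succ_top (by omega), ih]; ring

private lemma abel_aux (a bb : ℕ → ℝ) (m : ℕ) :
    ∑ k ∈ Icc 1 (m+1), bb k * (a k - a (k-1)) =
      bb (m+1) * a (m+1) - bb 1 * a 0 + ∑ k ∈ Icc 1 m, (bb k - bb (k+1)) * a k := by
  induction m with
  | zero => simp; ring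
  | succ m ih =>
    rw [Finset.sum_Icc_succ_top (by omega), ih, Finset.sum_Icc_succ_top (by omega : 1 ≤ m+1)]
    simp only [Nat.add_sub_cancel]
    ring

set_option maxHeartbeats 2000000

/-- corrected discrete energy inequality for the variable-order
L1 operator: `⟨Δ_τ^{ν(t_n)} φ^n, φ^n⟩ ≥ (1/τ)(E_n - E_{n-1}) - (1/(2τ)) b_{n,1} ‖φ^0‖²`. -/
theorem corrected_discrete_energy_inequality
    {H : Type*} [NormedAddCommGroup H] [InnerProductSpace ℝ H]
    (T : ℝ) (hT : 0 < T) (N : ℕ) (hN : 0 < N)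
    (τ : ℝ) (hτ : τ = T / N)
    (t : ℕ → ℝ) (ht : ∀ k, t k = k * τ)
    (ν : ℝ → ℝ) (hν : ∀ s ∈ Set.Icc (0 : ℝ) T, 0 < ν s ∧ ν s < 1)
    (b : ℕ → ℕ → ℝ)
    (hb : ∀ n k, 1 ≤ k → k ≤ n → n ≤ N →
      b n k = (1 / Real.Gamma (2 - ν (t n))) *
        ((t n - t (k - 1)) ^ (1 - ν (t n)) - (t n - t k) ^ (1 - ν (t n))))
    (φ : ℕ → H)
    (Θ : ℕ → ℝ) (hΘ0 : Θ 0 = 0)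
    (hΘ : ∀ n, 1 ≤ n → Θ n = (1 / 2) * ∑ k ∈ Finset.Icc 1 n, b n k * ‖φ k‖ ^ 2)
    (δ : ℕ → ℕ → ℝ) (hδ : ∀ n k, δ n k = b n (k + 1) - b (n - 1) k)
    (R : ℕ → ℝ) (hR0 : R 0 = 0) (hR1 : R 1 = 0)
    (hR : ∀ n, 2 ≤ n → R n = (1 / 2) * ∑ j ∈ Finset.Icc 2 n,
      ∑ k ∈ Finset.Icc 1 (j - 1), max (δ j k) 0 * ‖φ k‖ ^ 2)
    (E : ℕ → ℝ) (hE : ∀ n, E n = Θ n - R n)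
    (n : ℕ) (hn1 : 1 ≤ n) (hnN : n ≤ N) :
    ⟪(1 / τ) • ∑ k ∈ Finset.Icc 1 n, b n k • (φ k - φ (k - 1)), φ n⟫ ≥
      (1 / τ) * (E n - E (n - 1)) - (1 / (2 * τ)) * b n 1 * ‖φ 0‖ ^ 2 := by
  obtain ⟨m, rfl⟩ : ∃ m, n = m + 1 := ⟨n - 1, by omega⟩
  simp only [Nat.add_sub_cancel]
  -- basic positivity facts
  have hNpos : (0 : ℝ) < N := by exact_mod_cast hN
  have hτpos : 0 < τ := by rw [hτ]; positivity
  have htmem : t (m+1) ∈ Set.Icc (0 : ℝ) T := by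
    rw [ht]
    constructor
    · positivity
    · have h1 : ((m+1 : ℕ) : ℝ) ≤ (N : ℝ) := by exact_mod_cast hnN
      have h2 : (N : ℝ) * τ = T := by rw [hτ]; field_simp
      nlinarith
  obtain ⟨hν0, hν1⟩ := hν _ htmem
  set α : ℝ := 1 - ν (t (m+1)) with hα
  have hα0 : 0 < α := by simp [hα]; linarith
  have hα1 : α < 1 := by simp [hα]; linarith
  have hc : 0 < 1 / Real.Gamma (2 - ν (t (m+1))) := by
    have : 0 < Real.Gamma (2 - ν (t (m+1))) := Real.Gamma_pos_of_pos (by linarith)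
    positivity
  -- coefficient positivity
  have hb_pos : ∀ k, 1 ≤ k → k ≤ m + 1 → 0 < b (m+1) k := by
    intro k hk1 hk2
    rw [hb _ _ hk1 hk2 hnN]
    have hck : ((k - 1 : ℕ) : ℝ) = (k : ℝ) - 1 := by
      have := Nat.cast_sub hk1 (R := ℝ); simpa using this
    have e1 : t (m+1) - t k = (((m+1 : ℕ) : ℝ) - k) * τ := by rw [ht, ht]; ring
    have e0 : t (m+1) - t (k-1) = (((m+1 : ℕ) : ℝ) - k + 1) * τ := by
      rw [ht, ht, hck]; ring
    have hkle : (k : ℝ) ≤ ((m+1 : ℕ) : ℝ) := by exact_mod_cast hk2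
    have h1 : (0:ℝ) ≤ t (m+1) - t k := by rw [e1]; nlinarith
    have h2 : t (m+1) - t k < t (m+1) - t (k-1) := by rw [e0, e1]; nlinarith
    have := Real.rpow_lt_rpow h1 h2 hα0
    have hsub : (0:ℝ) < (t (m+1) - t (k-1)) ^ α - (t (m+1) - t k) ^ α := sub_pos.2 this
    exact mul_pos hc hsub
  -- coefficient monotonicity in k
  have hb_mono : ∀ k, 1 ≤ k → k + 1 ≤ m + 1 → b (m+1) k ≤ b (m+1) (k+1) := by
    intro k hk1 hk2
    rw [hb _ _ hk1 (by omega) hnN, hb _ _ (by omega) hk2 hnN]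
    simp only [Nat.add_sub_cancel]
    set x : ℝ := (((m+1 : ℕ) : ℝ) - k) * τ with hx
    have hck : ((k - 1 : ℕ) : ℝ) = (k : ℝ) - 1 := by
      have := Nat.cast_sub hk1 (R := ℝ); simpa using this
    have e0 : t (m+1) - t (k-1) = x + τ := by rw [ht, ht, hck, hx]; ring
    have e1 : t (m+1) - t k = x := by rw [ht, ht, hx]; ring
    have e2 : t (m+1) - t (k+1) = x - τ := by rw [ht, ht, hx]; push_cast; ring
    rw [e0, e1, e2]
    have hkle : (k : ℝ) + 1 ≤ ((m+1 : ℕ) : ℝ) := by exact_mod_cast hk2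
    have hxm : 0 ≤ x - τ := by rw [hx]; nlinarith
    have hxp : (0:ℝ) ≤ x + τ := by nlinarith
    have cc := (Real.concaveOn_rpow hα0.le hα1.le).2 (Set.mem_Ici.2 hxm) (Set.mem_Ici.2 hxp)
      (by norm_num : (0:ℝ) ≤ 1/2) (by norm_num : (0:ℝ) ≤ 1/2) (by norm_num)
    simp only [smul_eq_mul] at cc
    have hmid : (1/2 : ℝ) * (x - τ) + (1/2 : ℝ) * (x + τ) = x := by ring
    rw [hmid] at cc
    have key : (x - τ) ^ α + (x + τ) ^ α ≤ 2 * x ^ α := by linarith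
    have := mul_le_mul_of_nonneg_left (by linarith : (x + τ) ^ α - x ^ α ≤ x ^ α - (x - τ) ^ α) hc.le
    linarith
  -- rewrite the inner product as a real sum
  have hip : ⟪(1 / τ) • ∑ k ∈ Finset.Icc 1 (m+1), b (m+1) k • (φ k - φ (k - 1)), φ (m+1)⟫
      = (1/τ) * ∑ k ∈ Icc 1 (m+1), b (m+1) k * (⟪φ k, φ (m+1)⟫ - ⟪φ (k-1), φ (m+1)⟫) := by
    rw [real_inner_smul_left, sum_inner]
    congr 1
    refine Finset.sum_congr rfl fun k _ => ?_
    rw [real_inner_smul_left, inner_sub_left]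
  rw [hip]
  -- abbreviations
  set ip : ℕ → ℝ := fun k => ⟪φ k, φ (m+1)⟫ with hipdef
  set X : ℕ → ℝ := fun k => ‖φ k‖ ^ 2 with hX
  have hXnn : ∀ k, 0 ≤ X k := fun k => sq_nonneg _
  -- Abel summation
  have hAbel := abel_aux ip (b (m+1)) m
  -- inner product bounds
  have hipn : ip (m+1) = X (m+1) := real_inner_self_eq_norm_sq _
  have hipb : ∀ k, ip k ≤ (X k + X (m+1)) / 2 := by
    intro k
    have h1 := real_inner_le_norm (φ k) (φ (m+1))
    have h2 := sq_nonneg (‖φ k‖ - ‖φ (m+1)‖)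
    simp only [hipdef, hX]
    nlinarith
  -- sum bound via monotonicity
  have hsum1 : ∑ k ∈ Icc 1 m, (b (m+1) k - b (m+1) (k+1)) * ((X k + X (m+1)) / 2)
      ≤ ∑ k ∈ Icc 1 m, (b (m+1) k - b (m+1) (k+1)) * ip k := by
    refine Finset.sum_le_sum fun k hk => ?_
    have hk' := Finset.mem_Icc.1 hk
    have hcle : b (m+1) k - b (m+1) (k+1) ≤ 0 :=
      sub_nonpos.2 (hb_mono k hk'.1 (by omega))
    exact mul_le_mul_of_nonpos_left (hipb k) hcle
  -- telescoping
  have htel : ∑ k ∈ Icc 1 m, (b (m+1) k - b (m+1) (k+1)) = b (m+1) 1 - b (m+1) (m+1) :=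
    tel_aux (b (m+1)) m
  -- sum identity
  have hid : ∑ k ∈ Icc 1 m, (b (m+1) k - b (m+1) (k+1)) * ((X k + X (m+1)) / 2)
      = (1/2) * ((∑ k ∈ Icc 1 m, b (m+1) k * X k) - ∑ k ∈ Icc 1 m, b (m+1) (k+1) * X k)
        + (1/2) * (b (m+1) 1 - b (m+1) (m+1)) * X (m+1) := by
    calc ∑ k ∈ Icc 1 m, (b (m+1) k - b (m+1) (k+1)) * ((X k + X (m+1)) / 2)
        = ∑ k ∈ Icc 1 m, ((1/2) * (b (m+1) k * X k) - (1/2) * (b (m+1) (k+1) * X k)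
            + (X (m+1) / 2) * (b (m+1) k - b (m+1) (k+1))) :=
          Finset.sum_congr rfl fun k _ => by ring
      _ = _ := by
          rw [Finset.sum_add_distrib, Finset.sum_sub_distrib, ← Finset.mul_sum,
            ← Finset.mul_sum, ← Finset.mul_sum, htel]
          ring
  -- Θ values
  have hΘtop : ∑ k ∈ Icc 1 (m+1), b (m+1) k * X k
      = (∑ k ∈ Icc 1 m, b (m+1) k * X k) + b (m+1) (m+1) * X (m+1) :=
    Finset.sum_Icc_succ_top (by omega) _
  have hΘn : Θ (m+1) = (1/2) * ∑ k ∈ Icc 1 (m+1), b (m+1) k * X k := hΘ _ (by omega)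
  have hΘm : Θ m = (1/2) * ∑ k ∈ Icc 1 m, b m k * X k := by
    rcases Nat.eq_zero_or_pos m with h0 | h1
    · subst h0; simp [hΘ0]
    · exact hΘ m h1
  -- R difference
  have hRdiff : R (m+1) - R m = (1/2) * ∑ k ∈ Icc 1 m, max (δ (m+1) k) 0 * X k := by
    match m with
    | 0 => simp [hR0, hR1]
    | 1 =>
      rw [hR 2 (by norm_num), hR1]
      norm_num [Finset.Icc_self]
      exact Or.inl rfl
    | (m+2) =>
      rw [hR (m+3) (by omega), hR (m+2) (by omega),
        Finset.sum_Icc_succ_top (by omega : 2 ≤ m + 2 + 1)]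
      simp only [Nat.add_sub_cancel]
      ring
  -- δ bound
  have hWQ : (∑ k ∈ Icc 1 m, b (m+1) (k+1) * X k) - (∑ k ∈ Icc 1 m, b m k * X k)
      ≤ ∑ k ∈ Icc 1 m, max (δ (m+1) k) 0 * X k := by
    rw [← Finset.sum_sub_distrib]
    refine Finset.sum_le_sum fun k _ => ?_
    have h := hδ (m+1) k
    simp only [Nat.add_sub_cancel] at h
    have h2 : δ (m+1) k ≤ max (δ (m+1) k) 0 := le_max_left _ _
    nlinarith [hXnn k]
  -- the main scalar inequality
  have hip0 : b (m+1) 1 * ip 0 ≤ b (m+1) 1 * ((X 0 + X (m+1)) / 2) :=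
    mul_le_mul_of_nonneg_left (hipb 0) (hb_pos 1 le_rfl (by omega)).le
  have hmain : ∑ k ∈ Icc 1 (m+1), b (m+1) k * (ip k - ip (k-1))
      ≥ (E (m+1) - E m) - (1/2) * b (m+1) 1 * X 0 := by
    rw [hAbel, hE (m+1), hE m, hΘn, hΘm, hΘtop]
    rw [hipn]
    linarith [hsum1, hid, hWQ, hRdiff, hip0]
  -- conclude
  have hfin := mul_le_mul_of_nonneg_left hmain (by positivity : (0:ℝ) ≤ 1/τ)
  calc (1/τ) * ∑ k ∈ Icc 1 (m+1), b (m+1) k * (⟪φ k, φ (m+1)⟫ - ⟪φ (k-1), φ (m+1)⟫)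
      ≥ (1/τ) * ((E (m+1) - E m) - (1/2) * b (m+1) 1 * X 0) := hfin
    _ = (1/τ) * (E (m+1) - E m) - (1/(2*τ)) * b (m+1) 1 * ‖φ 0‖ ^ 2 := by
        simp only [hX]; ring
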